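/- For every integer n ≥ 1, the polynomial identity Σ_{j=0}^{n} C(n,j) · x · (x-2j)^(j-1) · (-1)^(n-j) · (2(n-j)+1)^(n-j-1) = (x-1)·(x-(2n+1))^(n-1) holds, where the j = 0 term is interpreted as x · x^(-1) · (-1)^n · (2n+1)^(n-1) = (-1)^n (2n+1)^(n-1) and the j = n term is x·(x-2n)^(n-1). -/

import Mathlib

open Polynomial

/-- Abel polynomial `x (x - 2m)^(m-1)` with `A 0 = 1`. -/
noncomputable def Apoly : ℕ → Polynomial ℤ
  | 0 => 1
  | (m+1) => X * (X - ((2*(m+1) : ℕ) : Polynomial ℤ)) ^ m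

/-- Value of the Abel polynomial at `-1`. -/
def aval (m : ℕ) : ℤ := (-1) ^ m * (2 * (m : ℤ) + 1) ^ (m - 1)

lemma deriv_Apoly (m : ℕ) :
    derivative (Apoly (m+1)) = ((m : Polynomial ℤ) + 1) * (Apoly m).comp (X - 2) := by
  cases m with
  | zero => simp [Apoly]
  | succ k =>
      simp only [Apoly]
      rw [derivative_mul, derivative_pow]
      simp only [derivative_X, derivative_sub, derivative_natCast, comp, eval₂_mul, eval₂_X,
        eval₂_pow, eval₂_sub, eval₂_natCast, map_add, map_one, map_natCast]
      push_cast
      ring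

lemma eval_neg_one_Apoly (m : ℕ) : eval (-1) (Apoly m) = aval m := by
  cases m with
  | zero => simp [Apoly, aval]
  | succ k =>
      simp only [Apoly, aval, eval_mul, eval_pow, eval_sub, eval_X, eval_natCast]
      rw [show ((-1 : ℤ) - (2*(k+1) : ℕ)) = -(2*((k+1 : ℕ) : ℤ)+1) by push_cast; ring,
        show ((k+1) - 1 : ℕ) = k from rfl, neg_pow]
      push_cast
      ring

lemma eval_zero_Apoly_succ (m : ℕ) : eval 0 (Apoly (m+1)) = 0 := by
  simp [Apoly]

/-- The Abel-type sum. -/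
noncomputable def Ppoly (n : ℕ) : Polynomial ℤ :=
  ∑ j ∈ Finset.range (n+1), C ((n.choose j : ℤ) * aval (n-j)) * Apoly j

lemma deriv_Ppoly (n : ℕ) :
    derivative (Ppoly (n+1)) = C ((n : ℤ) + 1) * (Ppoly n).comp (X - 2) := by
  unfold Ppoly
  rw [derivative_sum]
  rw [Finset.sum_range_succ']
  simp only [derivative_mul, derivative_C, zero_mul, zero_add, deriv_Apoly]
  rw [show (Apoly 0) = 1 from rfl]
  simp only [derivative_one, mul_zero, add_zero, Polynomial.sum_comp, mul_comp, C_comp]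
  rw [Finset.mul_sum]
  refine Finset.sum_congr rfl fun j hj => ?_
  have hp : ((n + 1 : ℕ) : ℤ) * (n.choose j : ℤ) = ((n+1).choose (j+1) : ℤ) * ((j : ℤ) + 1) := by
    exact_mod_cast congrArg (Nat.cast (R := ℤ)) (Nat.add_one_mul_choose_eq n j)
  rw [show ((j : Polynomial ℤ) + 1) = C ((j : ℤ) + 1) by simp,
    Nat.succ_sub_succ n j]
  rw [mul_left_comm, ← mul_assoc, ← mul_assoc, ← C_mul, ← C_mul]
  congr 1
  rw [C_inj]
  push_cast at hp
  linear_combination (-aval (n - j)) * hp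

lemma eval_zero_Ppoly (n : ℕ) : eval 0 (Ppoly n) = aval n := by
  unfold Ppoly
  rw [eval_finset_sum, Finset.sum_range_succ']
  simp [eval_zero_Apoly_succ, Apoly]

lemma key (n : ℕ) : Ppoly n = (Apoly n).comp (X - 1) := by
  induction n with
  | zero => simp [Ppoly, Apoly, aval]
  | succ n ih =>
      have hd : derivative (Ppoly (n+1)) = derivative ((Apoly (n+1)).comp (X - 1)) := by
        have e1 : ((X : Polynomial ℤ) - 1).comp (X - 2) = X - 3 := by
          simp only [sub_comp, X_comp, one_comp]; ring
        have e2 : ((X : Polynomial ℤ) - 2).comp (X - 1) = X - 3 := by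
          simp only [sub_comp, X_comp]; simp; ring
        rw [deriv_Ppoly, ih, Polynomial.comp_assoc, e1, derivative_comp, deriv_Apoly, mul_comp,
          Polynomial.comp_assoc, e2]
        simp only [derivative_sub, derivative_X, derivative_one, sub_zero, one_mul, add_comp,
          natCast_comp, one_comp, map_add, map_one, map_natCast]
      have h0 : eval 0 (Ppoly (n+1) - (Apoly (n+1)).comp (X - 1)) = 0 := by
        rw [eval_sub, eval_zero_Ppoly, eval_comp]
        simp [eval_neg_one_Apoly]
      have hc : Ppoly (n+1) - (Apoly (n+1)).comp (X - 1)
          = C (eval 0 (Ppoly (n+1) - (Apoly (n+1)).comp (X - 1))) := by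
        have := Polynomial.eq_C_of_derivative_eq_zero (p := Ppoly (n+1) - (Apoly (n+1)).comp (X - 1))
          (by rw [derivative_sub, hd, sub_self])
        rw [this]; simp
      rw [h0] at hc
      have := hc
      simp only [map_zero, sub_eq_zero] at this
      exact this

/-- The identity computing the characteristic polynomial of the poset of pointed
partitions of type `β`: for `n ≥ 1` and all integers `x`,
`(-1)^n(2n+1)^(n-1) + Σ_{j=1}^{n} C(n,j)·x·(x-2j)^(j-1)·(-1)^(n-j)·(2(n-j)+1)^(n-j-1)
  = (x-1)·(x-(2n+1))^(n-1)`
(the `j = n` term being `C(n,n)·x·(x-2n)^(n-1)`). -/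
theorem stmt4 (n : ℕ) (hn : 1 ≤ n) (x : ℤ) :
    (-1) ^ n * (2 * (n : ℤ) + 1) ^ (n - 1) +
      ∑ j ∈ Finset.Icc 1 n,
        (n.choose j : ℤ) * x * (x - 2 * (j : ℤ)) ^ (j - 1) * (-1) ^ (n - j) *
          (2 * ((n - j : ℕ) : ℤ) + 1) ^ (n - j - 1)
    = (x - 1) * (x - (2 * (n : ℤ) + 1)) ^ (n - 1) := by
  obtain ⟨m, rfl⟩ : ∃ m, n = m + 1 := ⟨n - 1, by omega⟩
  have h := congrArg (eval x) (key (m+1))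
  rw [eval_comp] at h
  unfold Ppoly at h
  rw [eval_finset_sum, Finset.sum_range_succ'] at h
  simp only [eval_mul, eval_C] at h
  rw [show (Apoly 0) = 1 from rfl] at h
  simp only [eval_one, mul_one, Nat.choose_zero_right, Nat.cast_one, one_mul, Nat.sub_zero] at h
  have hR : eval (eval x (X - 1 : Polynomial ℤ)) (Apoly (m+1))
      = (x - 1) * (x - (2 * ((m+1 : ℕ) : ℤ) + 1)) ^ (m+1-1) := by
    rw [show (Apoly (m+1)) = X * (X - ((2*(m+1) : ℕ) : Polynomial ℤ)) ^ m from rfl]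
    simp only [eval_mul, eval_pow, eval_sub, eval_X, eval_one, eval_natCast]
    rw [show (x - 1 - ((2*(m+1) : ℕ) : ℤ)) = x - (2*((m+1 : ℕ) : ℤ)+1) by push_cast; ring]
    norm_num
  rw [← Finset.Ico_add_one_right_eq_Icc, Finset.sum_Ico_eq_sum_range]
  rw [← hR, ← h, add_comm]
  congr 1
  refine Finset.sum_congr (by norm_num) fun i _ => ?_
  rw [show (Apoly (i+1)) = X * (X - ((2*(i+1) : ℕ) : Polynomial ℤ)) ^ i from rfl]
  simp only [eval_mul, eval_pow, eval_sub, eval_X, eval_natCast, aval]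
  rw [show 1 + i = i + 1 by ring]
  push_cast
  ring
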